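/- Let W be a Coxeter group with symmetrizable Cartan matrix, c a Coxeter element with reduced word s₁⋯s_n, and E_c the Euler form defined on simple co-roots and simple roots by E_c(α^∨_{s_i}, α_{s_j}) = a_{s_i s_j} if i > j, 1 if i = j, and 0 if i < j. If s is initial or final in c, then E_c(β^∨, β') = E_{scs}(sβ^∨, sβ') for all β^∨, β' in V. -/

import Mathlib

/-- A geometric (reflection) representation of the Coxeter system `cs`, arising from a
symmetrizable generalized Cartan matrix `a` with symmetrizing function `δ`.  The field `α`
records the simple roots (a basis of `V`), `ρ` is the reflection representation, and `β`
assigns to each reflection `t = w sᵢ w⁻¹` its positive root (the member of `±(w · αᵢ)` lying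
in the nonnegative span of the simple roots). -/
structure CoxeterGeomRep {B W : Type*} [Group W] (M : CoxeterMatrix B)
    (cs : CoxeterSystem M W) (V : Type*) [AddCommGroup V] [Module ℝ V] where
  /-- the generalized Cartan matrix -/
  a : B → B → ℝ
  /-- the symmetrizing function -/
  δ : B → ℝ
  δ_pos : ∀ i, 0 < δ i
  symmetrize : ∀ i j, δ i * a i j = δ j * a j i
  δ_conj : ∀ i j, IsConj (cs.simple i) (cs.simple j) → δ i = δ j
  a_diag : ∀ i, a i i = 2
  a_offdiag : ∀ i j, i ≠ j → a i j ≤ 0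
  a_fin : ∀ i j, i ≠ j → M i j ≠ 0 →
    a i j * a j i = 4 * Real.cos (Real.pi / (M i j : ℝ)) ^ 2
  a_inf : ∀ i j, M i j = 0 → 4 ≤ a i j * a j i
  a_zero : ∀ i j, a i j = 0 ↔ a j i = 0
  /-- the simple roots, a basis of `V` -/
  α : Module.Basis B ℝ V
  /-- the reflection representation of `W` on `V` -/
  ρ : W →* (V ≃ₗ[ℝ] V)
  act : ∀ i j, ρ (cs.simple i) (α j) = α j - a i j • α i
  /-- the positive root associated to each reflection -/
  β : W → V
  β_root : ∀ (w : W) (i : B),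
    β (w * cs.simple i * w⁻¹) = ρ w (α i) ∨ β (w * cs.simple i * w⁻¹) = -(ρ w (α i))
  β_pos : ∀ t, cs.IsReflection t →
    ∃ c : B →₀ ℝ, (∀ i, 0 ≤ c i) ∧ β t = c.sum fun i r => r • α i

/-- `v` lies in the nonnegative linear span (the cone generated by) the set `X`. -/
def InCone {V : Type*} [AddCommGroup V] [Module ℝ V] (X : Set V) (v : V) : Prop :=
  ∃ (n : ℕ) (x : Fin n → V) (c : Fin n → ℝ),
    (∀ k, x k ∈ X) ∧ (∀ k, 0 ≤ c k) ∧ v = ∑ k, c k • x k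

/-- `R` is the set of canonical generators of the reflection subgroup `W'`:  every positive
root of a reflection of `W'` lies in the nonnegative span of `{β_r : r ∈ R}`, and no `β_r`
lies in the nonnegative span of the positive roots of the other reflections of `W'`. -/
def IsCanonicalGenerators {B W V : Type*} [Group W] [AddCommGroup V] [Module ℝ V]
    {M : CoxeterMatrix B} (cs : CoxeterSystem M W) (g : CoxeterGeomRep M cs V)
    (W' : Subgroup W) (R : Set W) : Prop :=
  R ⊆ {t | t ∈ W' ∧ cs.IsReflection t} ∧
  (∀ t ∈ W', cs.IsReflection t → InCone (g.β '' R) (g.β t)) ∧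
  ∀ r ∈ R, ¬ InCone (g.β '' ({t | t ∈ W' ∧ cs.IsReflection t} \ {r})) (g.β r)
/-- `F` is the Euler form `E_c` for the Coxeter element `c` given by the reduced word `l`
(an enumeration of the simple generators):  on simple coroots and simple roots it is given
by `E_c(α^∨_{s_i}, α_{s_j}) = a_{s_i s_j}` if `i > j`, `1` if `i = j`, `0` if `i < j`. -/
def IsEulerForm {B W V : Type*} [Group W] [AddCommGroup V] [Module ℝ V]
    {M : CoxeterMatrix B} (cs : CoxeterSystem M W) (g : CoxeterGeomRep M cs V)
    (l : List B) (F : V →ₗ[ℝ] V →ₗ[ℝ] ℝ) : Prop :=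
  ∀ i j : Fin l.length,
    F ((g.δ (l.get i))⁻¹ • g.α (l.get i)) (g.α (l.get j)) =
      if (j : ℕ) < (i : ℕ) then g.a (l.get i) (l.get j)
      else if (i : ℕ) = (j : ℕ) then 1 else 0


section Helpers

variable {B W V : Type*} [Group W] [AddCommGroup V] [Module ℝ V]
  {M : CoxeterMatrix B} (cs : CoxeterSystem M W) (g : CoxeterGeomRep M cs V)

lemma eulerForm_val (l : List B) (F : V →ₗ[ℝ] V →ₗ[ℝ] ℝ)
    (hF : IsEulerForm cs g l F) (i j : Fin l.length) :
    F (g.α (l.get i)) (g.α (l.get j)) =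
      g.δ (l.get i) * (if (j : ℕ) < (i : ℕ) then g.a (l.get i) (l.get j)
        else if (i : ℕ) = (j : ℕ) then 1 else 0) := by
  have h := hF i j
  rw [map_smul, LinearMap.smul_apply, smul_eq_mul] at h
  have hd : g.δ (l.get i) ≠ 0 := (g.δ_pos _).ne'
  rw [← h, ← mul_assoc, mul_inv_cancel₀ hd, one_mul]

lemma euler_key (s : B) (t : List B) (hall : ∀ b : B, b ∈ s :: t)
    (F F' : V →ₗ[ℝ] V →ₗ[ℝ] ℝ)
    (hF : IsEulerForm cs g (s :: t) F) (hF' : IsEulerForm cs g (t ++ [s]) F') :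
    ∀ x y : V, F x y = F' (g.ρ (cs.simple s) x) (g.ρ (cs.simple s) y) := by
  set σ := (g.ρ (cs.simple s) : V ≃ₗ[ℝ] V).toLinearMap with hσ
  have key : F = F'.compl₁₂ σ σ := by
    apply LinearMap.ext_basis g.α g.α
    -- index constructions
    have i0 : Fin (s :: t).length := ⟨0, by simp⟩
    -- values of F
    have Fss : F (g.α s) (g.α s) = g.δ s := by
      have := eulerForm_val cs g (s :: t) F hF ⟨0, by simp⟩ ⟨0, by simp⟩
      simpa using this
    have Fsb : ∀ k : Fin t.length, F (g.α s) (g.α (t.get k)) = 0 := by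
      intro k
      have := eulerForm_val cs g (s :: t) F hF ⟨0, by simp⟩
        ⟨k + 1, by simp only [List.length_cons, List.length_append, List.length_singleton]; omega⟩
      simpa using this
    have Fbs : ∀ k : Fin t.length,
        F (g.α (t.get k)) (g.α s) = g.δ (t.get k) * g.a (t.get k) s := by
      intro k
      have := eulerForm_val cs g (s :: t) F hF ⟨k + 1, by simp only [List.length_cons, List.length_append, List.length_singleton]; omega⟩ ⟨0, by simp⟩
      simpa using this
    have Fbb : ∀ k k' : Fin t.length, F (g.α (t.get k)) (g.α (t.get k')) =
        g.δ (t.get k) * (if (k' : ℕ) < (k : ℕ) then g.a (t.get k) (t.get k')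
          else if (k : ℕ) = (k' : ℕ) then 1 else 0) := by
      intro k k'
      have := eulerForm_val cs g (s :: t) F hF ⟨k + 1, by simp only [List.length_cons, List.length_append, List.length_singleton]; omega⟩
        ⟨k' + 1, by simp only [List.length_cons, List.length_append, List.length_singleton]; omega⟩
      simpa using this
    -- values of F'
    have len' : (t ++ [s]).length = t.length + 1 := by simp
    have gets : (t ++ [s]).get ⟨t.length, by simp⟩ = s := by
      simp [List.get_eq_getElem]
    have getk : ∀ k : Fin t.length, (t ++ [s]).get ⟨k, by simp only [List.length_cons, List.length_append, List.length_singleton]; omega⟩ = t.get k := by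
      intro k
      simp [List.get_eq_getElem, List.getElem_append_left k.isLt]
    have F'ss : F' (g.α s) (g.α s) = g.δ s := by
      have := eulerForm_val cs g (t ++ [s]) F' hF' ⟨t.length, by simp⟩ ⟨t.length, by simp⟩
      rw [gets] at this
      simpa using this
    have F'sb : ∀ k : Fin t.length,
        F' (g.α s) (g.α (t.get k)) = g.δ s * g.a s (t.get k) := by
      intro k
      have := eulerForm_val cs g (t ++ [s]) F' hF' ⟨t.length, by simp⟩ ⟨k, by simp only [List.length_cons, List.length_append, List.length_singleton]; omega⟩
      rw [gets, getk] at this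
      have hk : (k : ℕ) < t.length := k.isLt
      simpa [hk] using this
    have F'bs : ∀ k : Fin t.length, F' (g.α (t.get k)) (g.α s) = 0 := by
      intro k
      have := eulerForm_val cs g (t ++ [s]) F' hF' ⟨k, by simp only [List.length_cons, List.length_append, List.length_singleton]; omega⟩ ⟨t.length, by simp⟩
      rw [gets, getk] at this
      have hk : (k : ℕ) < t.length := k.isLt
      have h1 : ¬ (t.length < (k : ℕ)) := by omega
      have h2 : (k : ℕ) ≠ t.length := by omega
      simpa [h1, h2] using this
    have F'bb : ∀ k k' : Fin t.length, F' (g.α (t.get k)) (g.α (t.get k')) =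
        g.δ (t.get k) * (if (k' : ℕ) < (k : ℕ) then g.a (t.get k) (t.get k')
          else if (k : ℕ) = (k' : ℕ) then 1 else 0) := by
      intro k k'
      have := eulerForm_val cs g (t ++ [s]) F' hF' ⟨k, by simp only [List.length_cons, List.length_append, List.length_singleton]; omega⟩ ⟨k', by simp only [List.length_cons, List.length_append, List.length_singleton]; omega⟩
      rw [getk, getk] at this
      simpa using this
    -- action of σ
    have hact : ∀ b : B, σ (g.α b) = g.α b - g.a s b • g.α s := by
      intro b
      simpa [hσ] using g.act s b
    have hass : g.a s s = 2 := g.a_diag s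
    intro i j
    have expand : ∀ x y : V, (F'.compl₁₂ σ σ) x y = F' (σ x) (σ y) := fun _ _ => rfl
    rw [expand, hact, hact]
    simp only [map_sub, map_smul, LinearMap.sub_apply, LinearMap.smul_apply, smul_eq_mul]
    by_cases hi : i = s <;> by_cases hj : j = s
    · rw [hi, hj, Fss, F'ss, hass]; ring
    · obtain ⟨k, hk⟩ := List.mem_iff_get.mp (by
        have := hall j; simpa [hj] using this : j ∈ t)
      rw [hi, ← hk, Fsb, F'sb, F'ss, hass]; ring
    · obtain ⟨k, hk⟩ := List.mem_iff_get.mp (by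
        have := hall i; simpa [hi] using this : i ∈ t)
      rw [hj, ← hk, Fbs, F'bs, F'ss, hass]
      have hsym := g.symmetrize (t.get k) s
      ring_nf
      ring_nf at hsym
      linarith
    · obtain ⟨k, hk⟩ := List.mem_iff_get.mp (by
        have := hall i; simpa [hi] using this : i ∈ t)
      obtain ⟨k', hk'⟩ := List.mem_iff_get.mp (by
        have := hall j; simpa [hj] using this : j ∈ t)
      rw [← hk, ← hk', Fbb, F'bb, F'bs, F'sb, F'ss]; ring
  intro x y
  rw [key]; rfl

end Helpers

/-- Let `c` be the Coxeter element with reduced word `l` (an enumeration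
of the simple generators), and let `s` be initial or final in `c`, so that `l'` (the word
obtained by moving `s` from one end of `l` to the other) is a reduced word for `scs`.  If
`E_c` and `E_{scs}` are the corresponding Euler forms, then
`E_c(β^∨, β') = E_{scs}(s β^∨, s β')` for all `β^∨, β' ∈ V`. -/
theorem euler_form_invariance
    {B W V : Type*} [Group W] [AddCommGroup V] [Module ℝ V]
    {M : CoxeterMatrix B} (cs : CoxeterSystem M W) (g : CoxeterGeomRep M cs V)
    (s : B) (l l' : List B) (hnd : l.Nodup) (hall : ∀ b : B, b ∈ l)
    (hrot : (∃ t, l = s :: t ∧ l' = t ++ [s]) ∨ (∃ t, l = t ++ [s] ∧ l' = s :: t))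
    (F F' : V →ₗ[ℝ] V →ₗ[ℝ] ℝ)
    (hF : IsEulerForm cs g l F) (hF' : IsEulerForm cs g l' F') :
    ∀ x y : V, F x y = F' (g.ρ (cs.simple s) x) (g.ρ (cs.simple s) y) := by
  rcases hrot with ⟨t, hl, hl'⟩ | ⟨t, hl, hl'⟩
  · subst hl; subst hl'
    exact euler_key cs g s t hall F F' hF hF'
  · subst hl; subst hl'
    have hall' : ∀ b : B, b ∈ s :: t := by
      intro b; have := hall b; simp at this ⊢; tauto
    have h := euler_key cs g s t hall' F' F hF' hF
    intro x y
    have hinv : ∀ v : V, g.ρ (cs.simple s) (g.ρ (cs.simple s) v) = v := by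
      intro v
      have : g.ρ (cs.simple s) * g.ρ (cs.simple s) = 1 := by
        rw [← map_mul, cs.simple_mul_simple_self, map_one]
      calc g.ρ (cs.simple s) (g.ρ (cs.simple s) v)
          = (g.ρ (cs.simple s) * g.ρ (cs.simple s)) v := rfl
        _ = v := by rw [this]; rfl
    have := h (g.ρ (cs.simple s) x) (g.ρ (cs.simple s) y)
    rw [hinv, hinv] at this
    exact this.symm
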